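/- The stem-set σ-algebra and the certificate-set σ-algebra on the space of infinite orders coincide: R(S) = R(Σ). Specifically, (a) for any n-order B, stem(B) = ⋃ᵢ cert(Γₙⁱ) where the union ranges over all covtree nodes Γₙⁱ at level n containing B; (b) for any node Γₙ = {A¹,…,Aᵏ} with complement Ω(n)∖Γₙ = {B¹,…,Bˡ}, cert(Γₙ) = ⋂ᵢ stem(Aⁱ) ∖ ⋃ⱼ stem(Bʲ). -/

import Mathlib

/-- A finite labeled order: a partial order structure on `Fin n`. -/
abbrev FinOrd (n : ℕ) := PartialOrder (Fin n)

/-- Isomorphism of two orders on `Fin n`. -/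
def OrdIso {n : ℕ} (p q : FinOrd n) : Prop :=
  Nonempty (p.le ≃r q.le)

instance ordSetoid (n : ℕ) : Setoid (FinOrd n) where
  r := OrdIso
  iseqv := by
    refine ⟨fun p => ⟨RelIso.refl _⟩, ?_, ?_⟩
    · rintro p q ⟨e⟩; exact ⟨e.symm⟩
    · rintro p q r ⟨e⟩ ⟨f⟩; exact ⟨e.trans f⟩

/-- An `n`-order: an isomorphism class of partial orders of cardinality `n`. -/
def NOrder (n : ℕ) := Quotient (ordSetoid n)

/-- `B` (a partial order on `Fin n`) occurs as a stem (finite downward-closed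
subcauset) in the partial order `p` on `α`. -/
def StemIn {n : ℕ} {α : Type*} (B : FinOrd n) (p : PartialOrder α) : Prop :=
  ∃ f : Fin n → α, Function.Injective f ∧
    (∀ i j : Fin n, B.le i j ↔ p.le (f i) (f j)) ∧
    (∀ (i : Fin n) (y : α), p.lt y (f i) → ∃ j : Fin n, f j = y)

/-- The `n`-order `B` is a stem in the order `p`. -/
def QStemIn {n : ℕ} {α : Type*} (B : NOrder n) (p : PartialOrder α) : Prop :=
  ∃ b : FinOrd n, ⟦b⟧ = B ∧ StemIn b p

/-- The set of `k`-stems of `p`, as a set of `k`-orders. -/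
def stems (k : ℕ) {α : Type*} (p : PartialOrder α) : Set (NOrder k) :=
  {B | QStemIn B p}

/-- Stem relation between unlabeled finite orders: `S` is a stem in `T`. -/
def NStemIn {n m : ℕ} (S : NOrder n) (T : NOrder m) : Prop :=
  ∃ t : FinOrd m, ⟦t⟧ = T ∧ QStemIn S t

/-- An order is past-finite if every element has finitely many elements below it. -/
def PastFinite {α : Type*} (p : PartialOrder α) : Prop :=
  ∀ x : α, {y : α | p.lt y x}.Finite

/-- The operation sending a set of `n`-orders to the set of `(n-1)`-stems of its
elements. -/
def Ominus (n : ℕ) (Γ : Set (NOrder n)) : Set (NOrder (n - 1)) :=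
  {B | ∃ A ∈ Γ, NStemIn B A}

/-- The `j`-fold iterate of `Ominus`. -/
def OminusIter : (j : ℕ) → (n : ℕ) → Set (NOrder n) → Set (NOrder (n - j))
  | 0, _, Γ => Γ
  | j + 1, n, Γ => Ominus (n - j) (OminusIter j n Γ)

/-- `Γ` is a node of covtree at level `n`: it is nonempty and has a certificate,
i.e. a (finite or countably infinite) past-finite order whose set of `n`-stems
is exactly `Γ`. -/
def IsNode (n : ℕ) (Γ : Set (NOrder n)) : Prop :=
  Γ.Nonempty ∧ ∃ (α : Type) (p : PartialOrder α), Countable α ∧ PastFinite p ∧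
    stems n p = Γ


/-- An infinite path in covtree, starting at the root: for each `n` a node of
covtree at level `n` (a nonempty set of `n`-orders admitting a certificate),
each node being directly below the next via the `O₋` operation.  (Level `0`
carries the trivial node consisting of the empty order.) -/
structure CovPath where
  node : (n : ℕ) → Set (NOrder n)
  nonempty : ∀ n, (node n).Nonempty
  isNode : ∀ n, IsNode n (node n)
  link : ∀ n, Ominus (n + 1) (node (n + 1)) = node n

/-- A naturally labeled infinite causet: a partial order on `ℕ` in which
`i ≺ j` implies `i < j` (hence past-finite). -/
def NatCauset := {p : PartialOrder ℕ // ∀ i j : ℕ, p.lt i j → i < j}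

instance natSetoid : Setoid NatCauset where
  r p q := Nonempty (p.val.le ≃r q.val.le)
  iseqv := by
    refine ⟨fun p => ⟨RelIso.refl _⟩, ?_, ?_⟩
    · rintro p q ⟨e⟩; exact ⟨e.symm⟩
    · rintro p q r ⟨e⟩ ⟨f⟩; exact ⟨e.trans f⟩

/-- The space `Ω` of infinite orders: isomorphism classes of countable
past-finite infinite causets. -/
def InfOrd := Quotient natSetoid

/-- The set of `n`-stems of an infinite order. -/
def Nstems (n : ℕ) (C : InfOrd) : Set (NOrder n) :=
  {B | ∃ c : NatCauset, ⟦c⟧ = C ∧ QStemIn B c.val}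

/-- The stem set of an `n`-order `B`: the set of infinite orders containing `B`
as a stem. -/
def stemSet {n : ℕ} (B : NOrder n) : Set InfOrd :=
  {C | B ∈ Nstems n C}

/-- The certificate set of a set `Γ` of `n`-orders: the set of infinite orders
whose set of `n`-stems is exactly `Γ`. -/
def certSet {n : ℕ} (Γ : Set (NOrder n)) : Set InfOrd :=
  {C | Nstems n C = Γ}

/-- The rogue equivalence relation: two infinite orders are equivalent iff they
have the same `n`-stems for every `n`. -/
instance rogueSetoid : Setoid InfOrd where
  r A B := ∀ n, Nstems n A = Nstems n B
  iseqv := by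
    refine ⟨fun A n => rfl, ?_, ?_⟩
    · intro A B h n; exact (h n).symm
    · intro A B C h h' n; exact (h n).trans (h' n)

/-- The quotient `Ω/∼_R` of infinite orders by the rogue equivalence. -/
def RQuot := Quotient rogueSetoid

open scoped Classical in
/-- The distance between two infinite orders: `2⁻ⁿ` where `n` is the largest
integer such that the two orders have the same set of `n`-stems, and `0` if
they have the same stems of every cardinality. -/
noncomputable def preDist (A B : InfOrd) : ℝ :=
  if ∀ n, Nstems n A = Nstems n B then 0
  else (2 : ℝ)⁻¹ ^ sSup {k : ℕ | Nstems k A = Nstems k B}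

/-- The induced metric on the quotient `Ω/∼_R`. -/
noncomputable def rdist : RQuot → RQuot → ℝ :=
  Quotient.lift₂ preDist (by
    intro a b a' b' ha hb
    have h : ∀ k, (Nstems k a = Nstems k b) ↔ (Nstems k a' = Nstems k b') := by
      intro k; rw [ha k, hb k]
    unfold preDist
    by_cases hall : ∀ n, Nstems n a = Nstems n b
    · rw [if_pos hall, if_pos (fun n => (h n).mp (hall n))]
    · rw [if_neg hall, if_neg (fun hc => hall (fun n => (h n).mpr (hc n)))]
      congr 1
      apply congrArg
      ext k
      exact h k)

/-- The image of a certificate set in the quotient `Ω/∼_R`. -/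
def certR {n : ℕ} (Γ : Set (NOrder n)) : Set RQuot :=
  (fun C : InfOrd => (⟦C⟧ : RQuot)) '' certSet Γ

/-- The diameter of a subset of `Ω/∼_R`: the supremum of distances between its
points. -/
noncomputable def rdiam (S : Set RQuot) : ℝ :=
  sSup {r : ℝ | ∃ x ∈ S, ∃ y ∈ S, rdist x y = r}


/-! Auxiliary lemmas -/

lemma stemIn_congr {n : ℕ} {α β : Type*} {b : FinOrd n} {p : PartialOrder α}
    {q : PartialOrder β} (e : p.le ≃r q.le) (h : StemIn b p) : StemIn b q := by
  obtain ⟨f, hf, hle, hdc⟩ := h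
  refine ⟨fun i => e (f i), e.injective.comp hf,
    fun i j => (hle i j).trans e.map_rel_iff.symm, ?_⟩
  intro i y hy
  rw [q.lt_iff_le_not_ge] at hy
  have h1 : p.le (e.symm y) (f i) := by
    have := hy.1
    rw [← e.apply_symm_apply y] at this
    exact e.map_rel_iff.mp this
  have h2 : ¬ p.le (f i) (e.symm y) := by
    intro hc
    have := e.map_rel_iff.mpr hc
    rw [e.apply_symm_apply] at this
    exact hy.2 this
  obtain ⟨j, hj⟩ := hdc i _ ((p.lt_iff_le_not_ge _ _).mpr ⟨h1, h2⟩)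
  exact ⟨j, by show e (f j) = y; rw [hj, e.apply_symm_apply]⟩

lemma qStemIn_congr {n : ℕ} {α β : Type*} {B : NOrder n} {p : PartialOrder α}
    {q : PartialOrder β} (e : p.le ≃r q.le) (h : QStemIn B p) : QStemIn B q := by
  obtain ⟨b, hb, hs⟩ := h
  exact ⟨b, hb, stemIn_congr e hs⟩

instance finOrdFinite (n : ℕ) : Finite (FinOrd n) := by
  have hinj : Function.Injective (fun p : FinOrd n => p.le) := by
    intro p q h
    exact PartialOrder.ext fun a b => by rw [show p.le = q.le from h]
  exact Finite.of_injective _ hinj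

instance nOrderFinite (n : ℕ) : Finite (NOrder n) :=
  Quotient.finite _

/-- Membership of `B` in `Nstems n C` can be checked on any representative. -/
lemma nstems_rep {n : ℕ} {B : NOrder n} {c : NatCauset} :
    B ∈ Nstems n (⟦c⟧ : InfOrd) ↔ QStemIn B c.val := by
  constructor
  · rintro ⟨c', hc', hs⟩
    exact qStemIn_congr (Classical.choice (Quotient.exact hc')) hs
  · intro hs
    exact ⟨c, rfl, hs⟩

lemma part_a (n : ℕ) (B : NOrder n) :
    stemSet B = ⋃ Γ ∈ {Γ : Set (NOrder n) | IsNode n Γ ∧ B ∈ Γ}, certSet Γ := by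
  ext C
  constructor
  · intro hC
    obtain ⟨c, hc, hs⟩ := id hC
    have hnode : IsNode n (Nstems n C) := by
      refine ⟨⟨B, hC⟩, ℕ, c.val, inferInstance, ?_, ?_⟩
      · intro x
        exact Set.Finite.subset (Set.finite_Iio x) (fun y hy => c.prop y x hy)
      · ext B'
        subst hc
        exact (nstems_rep (B := B') (c := c)).symm
    exact Set.mem_biUnion (show Nstems n C ∈ {Γ | IsNode n Γ ∧ B ∈ Γ} from ⟨hnode, hC⟩)
      (show Nstems n C = Nstems n C from rfl)
  · intro h
    obtain ⟨Γ, ⟨_, hBΓ⟩, hC⟩ := Set.mem_iUnion₂.mp h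
    have : Nstems n C = Γ := hC
    show B ∈ Nstems n C
    rw [this]; exact hBΓ

lemma part_b (n : ℕ) (Γ : Set (NOrder n)) :
    certSet Γ = (⋂ A ∈ Γ, stemSet A) \ ⋃ B ∈ Γᶜ, stemSet B := by
  ext C
  constructor
  · intro h
    have h' : Nstems n C = Γ := h
    refine ⟨Set.mem_iInter₂.mpr fun A hA => ?_, ?_⟩
    · show A ∈ Nstems n C
      rw [h']; exact hA
    · intro hmem
      obtain ⟨B, hB, hBC⟩ := Set.mem_iUnion₂.mp hmem
      exact hB (h' ▸ hBC)
  · rintro ⟨h1, h2⟩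
    show Nstems n C = Γ
    ext A
    constructor
    · intro hA
      by_contra hAn
      exact h2 (Set.mem_biUnion (show A ∈ Γᶜ from hAn) hA)
    · intro hA
      exact Set.mem_iInter₂.mp h1 A hA

/-- The stem-set σ-algebra and the certificate-set σ-algebra
on the space of infinite orders coincide: `R(S) = R(Σ)`.  Specifically,
(a) for any `n`-order `B`, `stem(B)` is the union of `cert(Γ)` over all
covtree nodes `Γ` at level `n` containing `B`; (b) for any covtree node `Γ` at
level `n`, `cert(Γ) = ⋂_{A ∈ Γ} stem(A) ∖ ⋃_{B ∉ Γ} stem(B)`; and the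
σ-algebras generated by the stem sets and by the certificate sets (with `∅`)
are equal. -/
theorem stem_algebra_eq_cert_algebra :
    (∀ (n : ℕ) (B : NOrder n),
      stemSet B = ⋃ Γ ∈ {Γ : Set (NOrder n) | IsNode n Γ ∧ B ∈ Γ}, certSet Γ) ∧
    (∀ (n : ℕ) (Γ : Set (NOrder n)), IsNode n Γ →
      certSet Γ = (⋂ A ∈ Γ, stemSet A) \ ⋃ B ∈ Γᶜ, stemSet B) ∧
    MeasurableSpace.generateFrom {s : Set InfOrd | ∃ (n : ℕ) (B : NOrder n), s = stemSet B}
      = MeasurableSpace.generateFrom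
          {s : Set InfOrd | s = ∅ ∨
            ∃ (n : ℕ) (Γ : Set (NOrder n)), IsNode n Γ ∧ s = certSet Γ} := by
  refine ⟨part_a, fun n Γ _ => part_b n Γ, le_antisymm ?_ ?_⟩
  · apply MeasurableSpace.generateFrom_le
    rintro s ⟨n, B, rfl⟩
    rw [part_a n B]
    exact MeasurableSet.biUnion (Set.to_countable _) fun Γ hΓ =>
      MeasurableSpace.measurableSet_generateFrom (Or.inr ⟨n, Γ, hΓ.1, rfl⟩)
  · apply MeasurableSpace.generateFrom_le
    rintro s (rfl | ⟨n, Γ, _, rfl⟩)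
    · exact @MeasurableSet.empty _ (MeasurableSpace.generateFrom _)
    · rw [part_b n Γ]
      exact MeasurableSet.diff
        (MeasurableSet.biInter (Set.to_countable _) fun A _ =>
          MeasurableSpace.measurableSet_generateFrom ⟨n, A, rfl⟩)
        (MeasurableSet.biUnion (Set.to_countable _) fun B _ =>
          MeasurableSpace.measurableSet_generateFrom ⟨n, B, rfl⟩)
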